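/- Let ≤ and ≤′ be two linear vector-space orders on the real vector space ⊕_E ℝ and let a be a rational vector. Let V_a, H_a be taken with respect to ≤ and V′_a, H′_a with respect to ≤′, and write Act(W) := span_ℝ(W ∩ rational vectors). If Act(V_a) ≠ Act(V′_a), or if H_a ∩ Act(V_a) ≠ H′_a ∩ Act(V′_a), then the orders ≤ and ≤′ differ on the rational vectors: there exists a rational vector x with 0 ≤ x but not 0 ≤′ x, or with 0 ≤′ x but not 0 ≤ x. -/

import Mathlib

/-- The rational vectors of `⊕_E ℝ`. -/
def RatVec (E : Type*) : Set (E →₀ ℝ) := {x | ∀ e : E, ∃ q : ℚ, x e = (q : ℝ)}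

/-- A linear vector-space order on `⊕_E ℝ`, given as a binary relation. -/
def IsLinVecOrder {E : Type*} (le : (E →₀ ℝ) → (E →₀ ℝ) → Prop) : Prop :=
  IsLinearOrder (E →₀ ℝ) le ∧
  (∀ x y z : E →₀ ℝ, le x y → le (x + z) (y + z)) ∧
  (∀ (α : ℝ) (v : E →₀ ℝ), 0 ≤ α → le 0 v → le 0 (α • v))

open Classical in
/-- `|a| = max (a, -a)` with respect to a total order `le`. -/
noncomputable def vabs {E : Type*} (le : (E →₀ ℝ) → (E →₀ ℝ) → Prop) (a : E →₀ ℝ) :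
    E →₀ ℝ :=
  if le 0 a then a else -a

/-- `V_a = span_ℝ {x | 0 ≤ x ∧ x ≤ |a|}`. -/
noncomputable def Vsub {E : Type*} (le : (E →₀ ℝ) → (E →₀ ℝ) → Prop) (a : E →₀ ℝ) :
    Submodule ℝ (E →₀ ℝ) :=
  Submodule.span ℝ {x | le 0 x ∧ le x (vabs le a)}

/-- `H_a = span_ℝ {x | 0 ≤ x ∧ ∀ n : ℕ, n • x ≤ |a|}`. -/
noncomputable def Hsub {E : Type*} (le : (E →₀ ℝ) → (E →₀ ℝ) → Prop) (a : E →₀ ℝ) :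
    Submodule ℝ (E →₀ ℝ) :=
  Submodule.span ℝ {x | le 0 x ∧ ∀ n : ℕ, le (n • x) (vabs le a)}

/-- The active subspace `Act(W) = span_ℝ (W ∩ rational vectors)`. -/
noncomputable def ActSub {E : Type*} (W : Submodule ℝ (E →₀ ℝ)) :
    Submodule ℝ (E →₀ ℝ) :=
  Submodule.span ℝ ((W : Set (E →₀ ℝ)) ∩ RatVec E)

namespace S16
variable {E : Type*} {le : (E →₀ ℝ) → (E →₀ ℝ) → Prop}

lemma lrefl (hle : IsLinVecOrder le) (x) : le x x :=
  hle.1.toIsPartialOrder.toIsPreorder.toRefl.refl x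
lemma ltot (hle : IsLinVecOrder le) (x y) : le x y ∨ le y x := hle.1.toTotal.total x y
lemma ltrans (hle : IsLinVecOrder le) {x y z} (h1 : le x y) (h2 : le y z) : le x z :=
  hle.1.toIsPartialOrder.toIsPreorder.toIsTrans.trans _ _ _ h1 h2
lemma lantisymm (hle : IsLinVecOrder le) {x y} (h1 : le x y) (h2 : le y x) : x = y :=
  hle.1.toIsPartialOrder.toAntisymm.antisymm _ _ h1 h2

lemma le_iff_sub (hle : IsLinVecOrder le) {x y} : le x y ↔ le 0 (y - x) := by
  constructor
  · intro h; have := hle.2.1 x y (-x) h; simpa [sub_eq_add_neg] using this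
  · intro h; have := hle.2.1 0 (y - x) x h; simpa using this

lemma lneg (hle : IsLinVecOrder le) {x y} (h : le x y) : le (-y) (-x) := by
  rw [le_iff_sub hle] at h ⊢
  simpa [neg_sub, sub_neg_eq_add, sub_eq_add_neg, add_comm] using h

lemma ladd (hle : IsLinVecOrder le) {x y z w} (h1 : le x y) (h2 : le z w) :
    le (x + z) (y + w) := by
  have a1 := hle.2.1 x y z h1
  have a2 := hle.2.1 z w y h2
  exact ltrans hle a1 (by simpa [add_comm] using a2)

lemma lsmul (hle : IsLinVecOrder le) {α : ℝ} {x y} (hα : 0 ≤ α) (h : le x y) :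
    le (α • x) (α • y) := by
  rw [le_iff_sub hle] at h ⊢
  have := hle.2.2 α _ hα h
  simpa [smul_sub] using this

lemma smul_le_smul_of_le (hle : IsLinVecOrder le) {b} (hb0 : le 0 b) {r s : ℝ}
    (hrs : r ≤ s) : le (r • b) (s • b) := by
  rw [le_iff_sub hle]
  have := hle.2.2 (s - r) b (by linarith) hb0
  simpa [sub_smul] using this

/-! ### Rational vectors -/

lemma rat_zero : (0 : E →₀ ℝ) ∈ RatVec E := fun e => ⟨0, by simp⟩
lemma rat_neg {x : E →₀ ℝ} (hx : x ∈ RatVec E) : -x ∈ RatVec E := fun e => by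
  obtain ⟨q, hq⟩ := hx e; exact ⟨-q, by simp [hq]⟩
lemma rat_add {x y : E →₀ ℝ} (hx : x ∈ RatVec E) (hy : y ∈ RatVec E) : x + y ∈ RatVec E :=
  fun e => by
    obtain ⟨q, hq⟩ := hx e; obtain ⟨r, hr⟩ := hy e
    exact ⟨q + r, by simp [hq, hr]⟩
lemma rat_sub {x y : E →₀ ℝ} (hx : x ∈ RatVec E) (hy : y ∈ RatVec E) : x - y ∈ RatVec E := by
  rw [sub_eq_add_neg]; exact rat_add hx (rat_neg hy)
lemma rat_qsmul {x : E →₀ ℝ} (hx : x ∈ RatVec E) (q : ℚ) : (q : ℝ) • x ∈ RatVec E :=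
  fun e => by
    obtain ⟨r, hr⟩ := hx e
    refine ⟨q * r, ?_⟩
    rw [Finsupp.smul_apply, hr]
    rw [smul_eq_mul]
    push_cast
    ring
lemma rat_nsmul {x : E →₀ ℝ} (hx : x ∈ RatVec E) (n : ℕ) : (n : ℝ) • x ∈ RatVec E := by
  have := rat_qsmul hx n; simpa using this

/-- Comparisons of rational vectors agree. -/
lemma agree2 {le' : (E →₀ ℝ) → (E →₀ ℝ) → Prop} (hle : IsLinVecOrder le)
    (hle' : IsLinVecOrder le')
    (hag : ∀ x ∈ RatVec E, (le 0 x ↔ le' 0 x)) {u v : E →₀ ℝ}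
    (hu : u ∈ RatVec E) (hv : v ∈ RatVec E) : le u v ↔ le' u v := by
  rw [le_iff_sub hle, le_iff_sub hle']
  exact hag _ (rat_sub hv hu)

/-! ### vabs -/

lemma vabs_nonneg (hle : IsLinVecOrder le) (a) : le 0 (vabs le a) := by
  unfold vabs
  split
  · assumption
  · rcases ltot hle 0 a with h | h
    · tauto
    · have := hle.2.1 a 0 (-a) h; simpa using this

lemma vabs_rat {a : E →₀ ℝ} (ha : a ∈ RatVec E) : vabs le a ∈ RatVec E := by
  unfold vabs; split
  · exact ha
  · exact rat_neg ha

lemma vabs_agree {le' : (E →₀ ℝ) → (E →₀ ℝ) → Prop}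
    (hag : ∀ x ∈ RatVec E, (le 0 x ↔ le' 0 x)) {a : E →₀ ℝ} (ha : a ∈ RatVec E) :
    vabs le a = vabs le' a := by
  classical
  unfold vabs
  congr 1
  · exact propext (hag a ha)

/-! ### The V characterization -/

/-- an auxiliary submodule: everything bounded by a multiple of `b`. -/
noncomputable def Vhat (hle : IsLinVecOrder le) {b : E →₀ ℝ} (hb0 : le 0 b) : Submodule ℝ (E →₀ ℝ) where
  carrier := {x | ∃ n : ℕ, le x ((n : ℝ) • b) ∧ le (-x) ((n : ℝ) • b)}
  zero_mem' := ⟨0, by simpa using lrefl hle 0, by simpa using lrefl hle 0⟩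
  add_mem' := by
    rintro x y ⟨n, hn1, hn2⟩ ⟨m, hm1, hm2⟩
    refine ⟨n + m, ?_, ?_⟩
    · have := ladd hle hn1 hm1; push_cast [add_smul]; exact this
    · have := ladd hle hn2 hm2; push_cast [add_smul, neg_add]; exact this
  smul_mem' := by
    rintro c x ⟨n, hn1, hn2⟩
    set m : ℕ := ⌈|c| * n⌉₊ with hm
    have hmle : |c| * n ≤ (m : ℝ) := Nat.le_ceil _
    have key : ∀ y : E →₀ ℝ, le y ((n : ℝ) • b) → le (-y) ((n : ℝ) • b) →
        le (c • y) ((m : ℝ) • b) := by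
      intro y h1 h2
      rcases le_or_gt 0 c with hc | hc
      · have := lsmul hle hc h1
        rw [smul_smul] at this
        refine ltrans hle this (smul_le_smul_of_le hle hb0 ?_)
        calc c * n = |c| * n := by rw [abs_of_nonneg hc]
        _ ≤ m := hmle
      · have := lsmul hle (by linarith : (0:ℝ) ≤ -c) h2
        rw [smul_smul, smul_neg, neg_smul, neg_neg] at this
        refine ltrans hle this (smul_le_smul_of_le hle hb0 ?_)
        calc -c * n = |c| * n := by rw [abs_of_neg hc]
        _ ≤ m := hmle
    refine ⟨m, key x hn1 hn2, ?_⟩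
    have := key (-x) hn2 (by simpa using hn1)
    simpa using this

lemma nonneg_scaled_mem (hle : IsLinVecOrder le) {a x : E →₀ ℝ} {n : ℕ}
    (hx0 : le 0 x) (hxn : le x ((n : ℝ) • vabs le a)) : x ∈ Vsub le a := by
  rcases Nat.eq_zero_or_pos n with h0 | hpos
  · subst h0
    simp only [Nat.cast_zero, zero_smul] at hxn
    have : x = 0 := lantisymm hle hxn hx0
    simp [this]
  · have hn : (0:ℝ) < n := by exact_mod_cast hpos
    have hy0 : le 0 ((n : ℝ)⁻¹ • x) := hle.2.2 _ _ (by positivity) hx0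
    have hyb : le ((n : ℝ)⁻¹ • x) (vabs le a) := by
      have := lsmul hle (α := (n:ℝ)⁻¹) (by positivity) hxn
      rwa [smul_smul, inv_mul_cancel₀ (ne_of_gt hn), one_smul] at this
    have hmem : ((n : ℝ)⁻¹ • x) ∈ Vsub le a := Submodule.subset_span ⟨hy0, hyb⟩
    have := Submodule.smul_mem (Vsub le a) (n : ℝ) hmem
    rwa [smul_smul, mul_inv_cancel₀ (ne_of_gt hn), one_smul] at this

lemma mem_Vsub_iff (hle : IsLinVecOrder le) (a x : E →₀ ℝ) :
    x ∈ Vsub le a ↔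
      ∃ n : ℕ, le x ((n : ℝ) • vabs le a) ∧ le (-x) ((n : ℝ) • vabs le a) := by
  constructor
  · intro hx
    have hsub : Vsub le a ≤ Vhat hle (vabs_nonneg hle a) := by
      rw [Vsub, Submodule.span_le]
      rintro y ⟨hy0, hyb⟩
      refine ⟨1, ?_, ?_⟩
      · simpa using hyb
      · have h1 : le (-y) 0 := by simpa using lneg hle hy0
        have h2 := ltrans hle h1 (vabs_nonneg hle a)
        simpa using h2
    exact hsub hx
  · rintro ⟨n, h1, h2⟩
    rcases ltot hle 0 x with hx0 | hx0
    · exact nonneg_scaled_mem hle hx0 h1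
    · have hx0' : le 0 (-x) := by simpa using lneg hle hx0
      have : -x ∈ Vsub le a := nonneg_scaled_mem hle hx0' h2
      simpa using (Vsub le a).neg_mem this

lemma mem_Hsub_iff (hle : IsLinVecOrder le) (a x : E →₀ ℝ) :
    x ∈ Hsub le a ↔ ∀ r : ℝ, le (r • x) (vabs le a) := by
  set b := vabs le a with hb
  have hb0 : le 0 b := vabs_nonneg hle a
  have hHhat : ∃ H : Submodule ℝ (E →₀ ℝ),
      (H : Set (E →₀ ℝ)) = {x | ∀ r : ℝ, le (r • x) b} := by
    refine ⟨⟨⟨⟨{x | ∀ r : ℝ, le (r • x) b}, ?_⟩, ?_⟩, ?_⟩, rfl⟩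
    · -- add_mem
      rintro x y hx hy r
      have h2x := hx (2 * r); have h2y := hy (2 * r)
      have hsum := ladd hle h2x h2y
      have := lsmul hle (α := (1:ℝ)/2) (by norm_num) hsum
      have e1 : ((1:ℝ)/2) • ((2 * r) • x + (2 * r) • y) = r • (x + y) := by
        rw [smul_add, smul_smul, smul_smul, smul_add]
        norm_num
        ring_nf
      have e2 : ((1:ℝ)/2) • (b + b) = b := by
        rw [smul_add]; rw [← add_smul]; norm_num
      rwa [e1, e2] at this
    · -- zero_mem
      intro r; simpa using hb0
    · -- smul_mem
      rintro c x hx r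
      have := hx (r * c)
      rwa [mul_smul] at this
  obtain ⟨H, hH⟩ := hHhat
  constructor
  · intro hx
    have hsub : Hsub le a ≤ H := by
      rw [Hsub, Submodule.span_le, hH]
      rintro y ⟨hy0, hyn⟩ r
      rcases le_or_gt r 0 with hr | hr
      · have h1 : le 0 ((-r) • y) := hle.2.2 _ _ (by linarith) hy0
        have h2 : le (r • y) 0 := by
          rw [le_iff_sub hle]; simpa [neg_smul] using h1
        exact ltrans hle h2 (ltrans hle hy0 (by simpa using hyn 1))
      · set m : ℕ := ⌈r⌉₊
        have hrm : r ≤ (m : ℝ) := Nat.le_ceil r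
        have h1 : le (r • y) ((m : ℝ) • y) := by
          rw [le_iff_sub hle, ← sub_smul]
          exact hle.2.2 _ _ (by linarith) hy0
        have h2 := hyn m
        rw [← Nat.cast_smul_eq_nsmul ℝ m y] at h2
        exact ltrans hle h1 h2
    have h' : x ∈ (H : Set (E →₀ ℝ)) := hsub hx
    rw [hH] at h'
    exact h'
  · intro hx
    rcases ltot hle 0 x with hx0 | hx0
    · refine Submodule.subset_span ⟨hx0, fun n => ?_⟩
      rw [← Nat.cast_smul_eq_nsmul ℝ n x]
      exact hx n
    · have hx0' : le 0 (-x) := by simpa using lneg hle hx0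
      have hmem : -x ∈ Hsub le a := by
        refine Submodule.subset_span ⟨hx0', fun n => ?_⟩
        rw [← Nat.cast_smul_eq_nsmul ℝ n (-x), smul_neg, ← neg_smul]
        exact hx (-(n:ℝ))
      simpa using (Hsub le a).neg_mem hmem

/-! ### The cut functional -/

noncomputable def cutf (le : (E →₀ ℝ) → (E →₀ ℝ) → Prop) (b x : E →₀ ℝ) : ℝ :=
  sSup {r : ℝ | ∃ q : ℚ, (q : ℝ) = r ∧ le ((q : ℝ) • b) x}

section cut
variable (hle : IsLinVecOrder le) {b : E →₀ ℝ} (hb0 : le 0 b) (hbne : b ≠ 0)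
include hle hb0 hbne

lemma key_cmp {r s : ℝ} (h : le (r • b) (s • b)) : r ≤ s := by
  by_contra hrs
  push_neg at hrs
  have h1 : le 0 ((r - s) • b) := hle.2.2 _ _ (by linarith) hb0
  have h2 : le ((r - s) • b) 0 := by
    rw [le_iff_sub hle] at h ⊢
    simpa [sub_smul] using h
  have h3 : (r - s) • b = 0 := lantisymm hle h2 h1
  rcases smul_eq_zero.mp h3 with h4 | h4
  · exact hrs.ne' (by linarith [sub_eq_zero.mp (by linarith [h4] : r - s = 0)])
  · exact hbne h4

set_option linter.unusedSectionVars false in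
lemma T_nonempty {x : E →₀ ℝ} (hx : x ∈ Vhat hle hb0) :
    {r : ℝ | ∃ q : ℚ, (q : ℝ) = r ∧ le ((q : ℝ) • b) x}.Nonempty := by
  obtain ⟨n, _, h2⟩ := hx
  refine ⟨((-(n : ℚ) : ℚ) : ℝ), -(n : ℚ), rfl, ?_⟩
  have := lneg hle h2
  push_cast
  simpa [neg_smul] using this

lemma T_bdd {x : E →₀ ℝ} (hx : x ∈ Vhat hle hb0) :
    BddAbove {r : ℝ | ∃ q : ℚ, (q : ℝ) = r ∧ le ((q : ℝ) • b) x} := by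
  obtain ⟨n, h1, _⟩ := hx
  refine ⟨(n : ℝ), ?_⟩
  rintro r ⟨q, rfl, hq⟩
  exact key_cmp hle hb0 hbne (ltrans hle hq h1)

lemma cutf_le {x : E →₀ ℝ} (hx : x ∈ Vhat hle hb0) {r : ℝ} (h : le x (r • b)) :
    cutf le b x ≤ r := by
  refine csSup_le (T_nonempty hle hb0 hbne hx) ?_
  rintro s ⟨q, rfl, hq⟩
  exact key_cmp hle hb0 hbne (ltrans hle hq h)

lemma le_cutf {x : E →₀ ℝ} (hx : x ∈ Vhat hle hb0) {r : ℝ} (h : le (r • b) x) :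
    r ≤ cutf le b x := by
  by_contra h'
  push_neg at h'
  obtain ⟨q, hq1, hq2⟩ := exists_rat_btwn h'
  have hmem : ((q : ℝ)) ∈ {r : ℝ | ∃ q : ℚ, (q : ℝ) = r ∧ le ((q : ℝ) • b) x} :=
    ⟨q, rfl, ltrans hle (smul_le_smul_of_le hle hb0 hq2.le) h⟩
  have := le_csSup (T_bdd hle hb0 hbne hx) hmem
  exact absurd this (by push_neg; exact hq1)

lemma lt_cutf_exists {x : E →₀ ℝ} (hx : x ∈ Vhat hle hb0) {c : ℝ} (h : c < cutf le b x) :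
    ∃ q : ℚ, c < (q : ℝ) ∧ le ((q : ℝ) • b) x := by
  obtain ⟨r, hr, hcr⟩ := exists_lt_of_lt_csSup (T_nonempty hle hb0 hbne hx) h
  obtain ⟨q, rfl, hq⟩ := hr
  exact ⟨q, hcr, hq⟩

lemma cutf_lt {x : E →₀ ℝ} (hx : x ∈ Vhat hle hb0) {r : ℝ} (h : cutf le b x < r) :
    le x (r • b) := by
  obtain ⟨q, hq1, hq2⟩ := exists_rat_btwn h
  have hnot : ¬ le ((q : ℝ) • b) x := by
    intro hmem
    have := le_csSup (T_bdd hle hb0 hbne hx) ⟨q, rfl, hmem⟩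
    exact absurd this (by push_neg; exact hq1)
  rcases ltot hle x ((q : ℝ) • b) with h' | h'
  · exact ltrans hle h' (smul_le_smul_of_le hle hb0 hq2.le)
  · exact absurd h' hnot

lemma cutf_add {x y : E →₀ ℝ} (hx : x ∈ Vhat hle hb0) (hy : y ∈ Vhat hle hb0) :
    cutf le b (x + y) = cutf le b x + cutf le b y := by
  have hxy : x + y ∈ Vhat hle hb0 := add_mem hx hy
  refine le_antisymm ?_ ?_
  · by_contra h
    push_neg at h
    obtain ⟨q, hq1, hq2⟩ := lt_cutf_exists hle hb0 hbne hxy h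
    obtain ⟨r₁, hr1, hr2⟩ := exists_rat_btwn
      (show cutf le b x < (q : ℝ) - cutf le b y by linarith)
    have hx1 : le x ((r₁ : ℝ) • b) := cutf_lt hle hb0 hbne hx hr1
    have hy1 : le y (((q : ℝ) - r₁) • b) := cutf_lt hle hb0 hbne hy (by linarith)
    have hsum : le (x + y) ((q : ℝ) • b) := by
      have := ladd hle hx1 hy1
      rwa [← add_smul, (by ring : (r₁ : ℝ) + ((q : ℝ) - r₁) = (q : ℝ))] at this
    have heq : x + y = (q : ℝ) • b := lantisymm hle hsum hq2
    have hstep : ∀ s : ℚ, cutf le b y < (s : ℝ) → (q : ℝ) - s ≤ cutf le b x := by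
      intro s hs
      have hys : le y ((s : ℝ) • b) := cutf_lt hle hb0 hbne hy hs
      have h1 : le ((x + y) + -((s : ℝ) • b)) ((x + y) + -y) :=
        ladd hle (lrefl hle _) (lneg hle hys)
      have e1 : (x + y) + -((s : ℝ) • b) = ((q : ℝ) - (s : ℝ)) • b := by
        rw [heq, sub_smul]; abel
      have e2 : (x + y) + -y = x := by abel
      rw [e1, e2] at h1
      exact le_cutf hle hb0 hbne hx h1
    have : ¬ (cutf le b y < (q : ℝ) - cutf le b x) → False := by
      intro hc; push_neg at hc; linarith
    refine this ?_
    intro hc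
    obtain ⟨s, hs1, hs2⟩ := exists_rat_btwn hc
    have := hstep s hs1
    linarith
  · have h1 : cutf le b x ≤ cutf le b (x + y) - cutf le b y := by
      refine csSup_le (T_nonempty hle hb0 hbne hx) ?_
      rintro r ⟨q1, rfl, hq1⟩
      have h2 : cutf le b y ≤ cutf le b (x + y) - (q1 : ℝ) := by
        refine csSup_le (T_nonempty hle hb0 hbne hy) ?_
        rintro s ⟨q2, rfl, hq2⟩
        have : le (((q1 : ℝ) + (q2 : ℝ)) • b) (x + y) := by
          rw [add_smul]; exact ladd hle hq1 hq2
        have := le_cutf hle hb0 hbne hxy this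
        linarith
      linarith
    linarith

lemma cutf_zero : cutf le b 0 = 0 := by
  have h0 : (0 : E →₀ ℝ) ∈ Vhat hle hb0 := zero_mem _
  have := cutf_add hle hb0 hbne h0 h0
  simp only [add_zero] at this
  linarith

lemma cutf_neg {x : E →₀ ℝ} (hx : x ∈ Vhat hle hb0) : cutf le b (-x) = -cutf le b x := by
  have := cutf_add hle hb0 hbne hx (neg_mem hx)
  rw [add_neg_cancel, cutf_zero hle hb0 hbne] at this
  linarith

lemma cutf_smul_pos_le {x : E →₀ ℝ} (hx : x ∈ Vhat hle hb0) {c : ℝ} (hc : 0 < c) :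
    c * cutf le b x ≤ cutf le b (c • x) := by
  have hcx : c • x ∈ Vhat hle hb0 := Submodule.smul_mem _ c hx
  have h1 : cutf le b x ≤ cutf le b (c • x) / c := by
    refine csSup_le (T_nonempty hle hb0 hbne hx) ?_
    rintro r ⟨q, rfl, hq⟩
    have h2 : le ((c * (q : ℝ)) • b) (c • x) := by
      have := lsmul hle hc.le hq
      rwa [smul_smul] at this
    have h3 := le_cutf hle hb0 hbne hcx h2
    rw [le_div_iff₀ hc]
    linarith [h3]
  calc c * cutf le b x ≤ c * (cutf le b (c • x) / c) :=
        mul_le_mul_of_nonneg_left h1 hc.le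
  _ = cutf le b (c • x) := by field_simp

lemma cutf_smul {x : E →₀ ℝ} (hx : x ∈ Vhat hle hb0) (c : ℝ) :
    cutf le b (c • x) = c * cutf le b x := by
  rcases lt_trichotomy c 0 with hc | hc | hc
  · have hx' : (-c) • x ∈ Vhat hle hb0 := Submodule.smul_mem _ _ hx
    have e : c • x = -((-c) • x) := by rw [neg_smul, neg_neg]
    rw [e, cutf_neg hle hb0 hbne hx']
    have h1 : (-c) * cutf le b x ≤ cutf le b ((-c) • x) :=
      cutf_smul_pos_le hle hb0 hbne hx (by linarith)
    have h2 : (-c)⁻¹ * cutf le b ((-c) • x) ≤ cutf le b x := by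
      have := cutf_smul_pos_le hle hb0 hbne hx' (c := (-c)⁻¹) (inv_pos.mpr (by linarith))
      rwa [smul_smul, inv_mul_cancel₀ (by linarith : (-c) ≠ 0), one_smul] at this
    have h3 : cutf le b ((-c) • x) ≤ (-c) * cutf le b x := by
      have := mul_le_mul_of_nonneg_left h2 (by linarith : (0:ℝ) ≤ -c)
      rwa [← mul_assoc, mul_inv_cancel₀ (by linarith : (-c) ≠ 0), one_mul] at this
    nlinarith [le_antisymm h3 h1]
  · subst hc; simp [cutf_zero hle hb0 hbne]
  · have h1 := cutf_smul_pos_le hle hb0 hbne hx hc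
    have hx' : c • x ∈ Vhat hle hb0 := Submodule.smul_mem _ _ hx
    have h2 : c⁻¹ * cutf le b (c • x) ≤ cutf le b x := by
      have := cutf_smul_pos_le hle hb0 hbne hx' (c := c⁻¹) (inv_pos.mpr hc)
      rwa [smul_smul, inv_mul_cancel₀ (ne_of_gt hc), one_smul] at this
    have h3 : cutf le b (c • x) ≤ c * cutf le b x := by
      have := mul_le_mul_of_nonneg_left h2 hc.le
      rwa [← mul_assoc, mul_inv_cancel₀ (ne_of_gt hc), one_mul] at this
    linarith

end cut

section cut2
variable (hle : IsLinVecOrder le) {b : E →₀ ℝ} (hb0 : le 0 b) (hbne : b ≠ 0)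
include hle hb0

lemma hgood_Vhat {x : E →₀ ℝ} (h : ∀ r : ℝ, le (r • x) b) : x ∈ Vhat hle hb0 := by
  refine ⟨1, ?_, ?_⟩
  · have := h 1; simpa using this
  · have := h (-1); simpa [neg_smul] using this

include hbne

lemma cutf_nonpos {x : E →₀ ℝ} (h : ∀ r : ℝ, le (r • x) b) : cutf le b x ≤ 0 := by
  have hx := hgood_Vhat hle hb0 h
  refine csSup_le (T_nonempty hle hb0 hbne hx) ?_
  rintro r ⟨q, rfl, hq⟩
  by_contra hq0
  push_neg at hq0
  obtain ⟨n, hn⟩ := exists_nat_gt (1 / (q : ℝ))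
  have hnq : (1 : ℝ) < n * q := by
    rw [div_lt_iff₀ hq0] at hn
    linarith [hn]
  have h1 : le (((n : ℝ) * (q : ℝ)) • b) ((n : ℝ) • x) := by
    have := lsmul hle (by positivity : (0:ℝ) ≤ (n:ℝ)) hq
    rwa [smul_smul] at this
  have h2 : le ((n : ℝ) • x) ((1 : ℝ) • b) := by rw [one_smul]; exact h n
  have := key_cmp hle hb0 hbne (ltrans hle h1 h2)
  linarith

lemma cutf_eq_zero_of_hgood {x : E →₀ ℝ} (h : ∀ r : ℝ, le (r • x) b) : cutf le b x = 0 := by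
  have hx := hgood_Vhat hle hb0 h
  have h1 := cutf_nonpos hle hb0 hbne h
  have h2 : cutf le b (-x) ≤ 0 := by
    refine cutf_nonpos hle hb0 hbne ?_
    intro r
    have := h (-r)
    rw [smul_neg, ← neg_smul]
    exact this
  rw [cutf_neg hle hb0 hbne hx] at h2
  linarith

lemma hgood_of_cutf_eq_zero {x : E →₀ ℝ} (hx : x ∈ Vhat hle hb0) (h : cutf le b x = 0) :
    ∀ r : ℝ, le (r • x) b := by
  intro r
  have hrx : r • x ∈ Vhat hle hb0 := Submodule.smul_mem _ _ hx
  have hc : cutf le b (r • x) < 1 := by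
    rw [cutf_smul hle hb0 hbne hx, h]; norm_num
  have := cutf_lt hle hb0 hbne hrx hc
  rwa [one_smul] at this

end cut2

lemma cutf_rat_eq {le' : (E →₀ ℝ) → (E →₀ ℝ) → Prop} (hle : IsLinVecOrder le)
    (hle' : IsLinVecOrder le')
    (hag : ∀ x ∈ RatVec E, (le 0 x ↔ le' 0 x)) {b x : E →₀ ℝ}
    (hb : b ∈ RatVec E) (hx : x ∈ RatVec E) : cutf le b x = cutf le' b x := by
  unfold cutf
  congr 1
  ext r
  constructor
  · rintro ⟨q, rfl, hq⟩
    exact ⟨q, rfl, (agree2 hle hle' hag (rat_qsmul hb q) hx).mp hq⟩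
  · rintro ⟨q, rfl, hq⟩
    exact ⟨q, rfl, (agree2 hle hle' hag (rat_qsmul hb q) hx).mpr hq⟩

/-! ### Degenerate case -/

lemma Vsub_bot (hle : IsLinVecOrder le) {a : E →₀ ℝ} (h0 : vabs le a = 0) :
    Vsub le a = ⊥ := by
  rw [Vsub, Submodule.span_eq_bot]
  rintro x ⟨h1, h2⟩
  rw [h0] at h2
  exact (lantisymm hle h2 h1)

lemma Hsub_bot (hle : IsLinVecOrder le) {a : E →₀ ℝ} (h0 : vabs le a = 0) :
    Hsub le a = ⊥ := by
  rw [Hsub, Submodule.span_eq_bot]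
  rintro x ⟨h1, h2⟩
  have := h2 1
  rw [h0, one_smul] at this
  exact (lantisymm hle this h1)

lemma ActSub_bot : ActSub (⊥ : Submodule ℝ (E →₀ ℝ)) = ⊥ := by
  rw [ActSub, Submodule.span_eq_bot]
  rintro x ⟨h1, -⟩
  simpa using h1

/-! ### Main equalities -/

lemma main_eqs {le' : (E →₀ ℝ) → (E →₀ ℝ) → Prop} (hle : IsLinVecOrder le)
    (hle' : IsLinVecOrder le') {a : E →₀ ℝ} (ha : a ∈ RatVec E)
    (hag : ∀ x ∈ RatVec E, (le 0 x ↔ le' 0 x)) :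
    ActSub (Vsub le a) = ActSub (Vsub le' a) ∧
      Hsub le a ⊓ ActSub (Vsub le a) = Hsub le' a ⊓ ActSub (Vsub le' a) := by
  have hvab : vabs le a = vabs le' a := vabs_agree hag ha
  set b : E →₀ ℝ := vabs le a with hbdef
  have hbrat : b ∈ RatVec E := vabs_rat ha
  have hb0 : le 0 b := vabs_nonneg hle a
  have hb0' : le' 0 b := by rw [hvab]; exact vabs_nonneg hle' a
  by_cases hbz : b = 0
  · -- degenerate case
    have e1 : Vsub le a = ⊥ := Vsub_bot hle hbz
    have e2 : Vsub le' a = ⊥ := Vsub_bot hle' (by rw [← hvab]; exact hbz)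
    have e3 : Hsub le a = ⊥ := Hsub_bot hle hbz
    have e4 : Hsub le' a = ⊥ := Hsub_bot hle' (by rw [← hvab]; exact hbz)
    rw [e1, e2, e3, e4, ActSub_bot]
    exact ⟨rfl, rfl⟩
  -- nondegenerate case
  -- Step A: generator sets agree
  have hgen : (Vsub le a : Set (E →₀ ℝ)) ∩ RatVec E
      = (Vsub le' a : Set (E →₀ ℝ)) ∩ RatVec E := by
    ext x
    constructor
    · rintro ⟨hxV, hxQ⟩
      obtain ⟨n, h1, h2⟩ := (mem_Vsub_iff hle a x).mp hxV
      refine ⟨(mem_Vsub_iff hle' a x).mpr ⟨n, ?_, ?_⟩, hxQ⟩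
      · rw [← hvab]
        exact (agree2 hle hle' hag hxQ (rat_nsmul hbrat n)).mp h1
      · rw [← hvab]
        exact (agree2 hle hle' hag (rat_neg hxQ) (rat_nsmul hbrat n)).mp h2
    · rintro ⟨hxV, hxQ⟩
      obtain ⟨n, h1, h2⟩ := (mem_Vsub_iff hle' a x).mp hxV
      rw [← hvab] at h1 h2
      refine ⟨(mem_Vsub_iff hle a x).mpr ⟨n, ?_, ?_⟩, hxQ⟩
      · exact (agree2 hle hle' hag hxQ (rat_nsmul hbrat n)).mpr h1
      · exact (agree2 hle hle' hag (rat_neg hxQ) (rat_nsmul hbrat n)).mpr h2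
  have hAct : ActSub (Vsub le a) = ActSub (Vsub le' a) := by
    rw [ActSub, ActSub, hgen]
  refine ⟨hAct, ?_⟩
  -- Step B
  have hP : ∀ x ∈ ActSub (Vsub le a),
      x ∈ Vhat hle hb0 ∧ x ∈ Vhat hle' hb0' ∧ cutf le b x = cutf le' b x := by
    intro x hx
    rw [ActSub] at hx
    induction hx using Submodule.span_induction with
    | mem y hy =>
      obtain ⟨hyV, hyQ⟩ := hy
      have hyV' : y ∈ Vsub le' a := by
        have : y ∈ (Vsub le' a : Set (E →₀ ℝ)) ∩ RatVec E := hgen ▸ ⟨hyV, hyQ⟩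
        exact this.1
      obtain ⟨n, h1, h2⟩ := (mem_Vsub_iff hle a y).mp hyV
      obtain ⟨m, h1', h2'⟩ := (mem_Vsub_iff hle' a y).mp hyV'
      rw [← hvab] at h1' h2'
      exact ⟨⟨n, h1, h2⟩, ⟨m, h1', h2'⟩, cutf_rat_eq hle hle' hag hbrat hyQ⟩
    | zero =>
      exact ⟨zero_mem _, zero_mem _,
        by rw [cutf_zero hle hb0 hbz, cutf_zero hle' hb0' hbz]⟩
    | add y z hy hz ihy ihz =>
      obtain ⟨hy1, hy2, hy3⟩ := ihy
      obtain ⟨hz1, hz2, hz3⟩ := ihz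
      refine ⟨add_mem hy1 hz1, add_mem hy2 hz2, ?_⟩
      rw [cutf_add hle hb0 hbz hy1 hz1, cutf_add hle' hb0' hbz hy2 hz2, hy3, hz3]
    | smul c y hy ihy =>
      obtain ⟨hy1, hy2, hy3⟩ := ihy
      refine ⟨Submodule.smul_mem _ _ hy1, Submodule.smul_mem _ _ hy2, ?_⟩
      rw [cutf_smul hle hb0 hbz hy1, cutf_smul hle' hb0' hbz hy2, hy3]
  ext x
  simp only [Submodule.mem_inf]
  constructor
  · rintro ⟨hH, hA⟩
    obtain ⟨hV, hV', hcut⟩ := hP x hA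
    have h0 : cutf le b x = 0 := by
      refine cutf_eq_zero_of_hgood hle hb0 hbz ?_
      intro r
      exact (mem_Hsub_iff hle a x).mp hH r
    have h0' : cutf le' b x = 0 := by rw [← hcut]; exact h0
    refine ⟨(mem_Hsub_iff hle' a x).mpr ?_, hAct ▸ hA⟩
    intro r
    rw [← hvab]
    exact hgood_of_cutf_eq_zero hle' hb0' hbz hV' h0' r
  · rintro ⟨hH, hA⟩
    have hA' : x ∈ ActSub (Vsub le a) := hAct ▸ hA
    obtain ⟨hV, hV', hcut⟩ := hP x hA'
    have h0' : cutf le' b x = 0 := by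
      refine cutf_eq_zero_of_hgood hle' hb0' hbz ?_
      intro r
      rw [hvab]
      exact (mem_Hsub_iff hle' a x).mp hH r
    have h0 : cutf le b x = 0 := by rw [hcut]; exact h0'
    refine ⟨(mem_Hsub_iff hle a x).mpr ?_, hA'⟩
    intro r
    exact hgood_of_cutf_eq_zero hle hb0 hbz hV h0 r

end S16

/-- if `Act(V_a) ≠ Act(V′_a)` or `H_a ∩ Act(V_a) ≠ H′_a ∩ Act(V′_a)` for a
rational vector `a`, then the two linear vector-space orders differ on the rational
vectors. -/
theorem stmt16 {E : Type*}
    (le le' : (E →₀ ℝ) → (E →₀ ℝ) → Prop)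
    (hle : IsLinVecOrder le) (hle' : IsLinVecOrder le')
    (a : E →₀ ℝ) (ha : a ∈ RatVec E)
    (h : ActSub (Vsub le a) ≠ ActSub (Vsub le' a) ∨
      Hsub le a ⊓ ActSub (Vsub le a) ≠ Hsub le' a ⊓ ActSub (Vsub le' a)) :
    ∃ x ∈ RatVec E, ¬ (le 0 x ↔ le' 0 x) := by
  by_contra hc
  push_neg at hc
  obtain ⟨e1, e2⟩ := S16.main_eqs hle hle' ha hc
  rcases h with h | h
  · exact h e1
  · exact h e2
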